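/- Suppose σ_{y·zx} > 0 (i.e. R²_{y·zx} < 1), σ_{z·x} > 0, σ_{w·x} > 0, σ_{w·zx} > 0 and σ_{z·wx} > 0 (i.e. t_W is finite). Then the change in the Z-coefficient caused by omitting W satisfies b̂ − β̂ = SE(b̂) · t_W · ρ_{yw·zx}. -/

import Mathlib

open scoped BigOperators

/-- Weighted inner product on ℝⁿ: `(A,B) := (∑ i, wᵢ Aᵢ Bᵢ) / (∑ i, wᵢ)`. -/
noncomputable def wip {n : ℕ} (w A B : Fin n → ℝ) : ℝ :=
  (∑ i, w i * A i * B i) / (∑ i, w i)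

/-- `P` is the best linear predictor (orthogonal projection with respect to the
weighted inner product `wip w`) of `A` onto the span of the collection `C`. -/
def IsBlp {n : ℕ} (w : Fin n → ℝ) (C : Set (Fin n → ℝ)) (A P : Fin n → ℝ) : Prop :=
  P ∈ Submodule.span ℝ C ∧ ∀ v ∈ Submodule.span ℝ C, wip w (A - P) v = 0

lemma wip_comm {n : ℕ} (w A B : Fin n → ℝ) : wip w A B = wip w B A := by
  unfold wip; congr 1; exact Finset.sum_congr rfl fun i _ => by ring

lemma wip_sub_left {n : ℕ} (w A B C : Fin n → ℝ) :
    wip w (A - B) C = wip w A C - wip w B C := by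
  unfold wip
  rw [← sub_div, ← Finset.sum_sub_distrib]
  exact congrArg (· / _) (Finset.sum_congr rfl fun i _ => by simp only [Pi.sub_apply]; ring)

lemma wip_add_left {n : ℕ} (w A B C : Fin n → ℝ) :
    wip w (A + B) C = wip w A C + wip w B C := by
  unfold wip
  rw [← add_div, ← Finset.sum_add_distrib]
  exact congrArg (· / _) (Finset.sum_congr rfl fun i _ => by simp only [Pi.add_apply]; ring)

lemma wip_smul_left {n : ℕ} (w A B : Fin n → ℝ) (r : ℝ) :
    wip w (r • A) B = r * wip w A B := by
  unfold wip
  rw [← mul_div_assoc, Finset.mul_sum]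
  exact congrArg (· / _)
    (Finset.sum_congr rfl fun i _ => by simp only [Pi.smul_apply, smul_eq_mul]; ring)

lemma wip_split {n : ℕ} (w A P C : Fin n → ℝ) :
    wip w A C = wip w (A - P) C + wip w P C := by
  rw [wip_sub_left]; ring

lemma wip_split_right {n : ℕ} (w A P C : Fin n → ℝ) :
    wip w C A = wip w C (A - P) + wip w C P := by
  rw [wip_comm, wip_comm w C (A - P), wip_comm w C P, wip_sub_left]; ring

lemma wip_affine {n : ℕ} (w Z x C : Fin n → ℝ) (g : ℝ) :
    wip w (g • Z + x) C = g * wip w Z C + wip w x C := by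
  rw [wip_add_left, wip_smul_left]

lemma dim_aux {n : ℕ} (X : Set (Fin n → ℝ)) (Z W : Fin n → ℝ)
    (hZ : Z ∉ Submodule.span ℝ X)
    (hW : W ∉ Submodule.span ℝ (insert Z X)) :
    Module.finrank ℝ (Submodule.span ℝ X) + 2 ≤ n := by
  have hle1 : Submodule.span ℝ X ≤ Submodule.span ℝ (insert Z X) :=
    Submodule.span_mono (Set.subset_insert _ _)
  have hle2 : Submodule.span ℝ (insert Z X) ≤ Submodule.span ℝ (insert W (insert Z X)) :=
    Submodule.span_mono (Set.subset_insert _ _)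
  have hlt1 : Submodule.span ℝ X < Submodule.span ℝ (insert Z X) :=
    SetLike.lt_iff_le_and_exists.mpr ⟨hle1, Z, Submodule.subset_span (Set.mem_insert _ _), hZ⟩
  have hlt2 : Submodule.span ℝ (insert Z X) < Submodule.span ℝ (insert W (insert Z X)) :=
    SetLike.lt_iff_le_and_exists.mpr ⟨hle2, W, Submodule.subset_span (Set.mem_insert _ _), hW⟩
  have h1 := Submodule.finrank_lt_finrank_of_lt hlt1
  have h2 := Submodule.finrank_lt_finrank_of_lt hlt2
  have h3 : Module.finrank ℝ (Submodule.span ℝ (insert W (insert Z X))) ≤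
      Module.finrank ℝ (Fin n → ℝ) := Submodule.finrank_le _
  rw [Module.finrank_fin_fun] at h3
  omega

lemma alg (A a b B D c d df bhat betahat : ℝ) (hA : 0<A) (ha : 0<a) (hb : 0<b)
    (hB : 0<B) (hD : 0<D) (hdf : 1 ≤ df) (hBD : a*B = b*D)
    (hkey : bhat - betahat = c*d/(a*B)) :
    bhat - betahat = Real.sqrt A/(Real.sqrt df * Real.sqrt a) *
      ((c/b)/(Real.sqrt D/(Real.sqrt df * Real.sqrt b))) *
      (d/(Real.sqrt A * Real.sqrt B)) := by
  have hdf0 : (0:ℝ) < df := by linarith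
  have hsA := Real.sqrt_pos.mpr hA
  have hsa := Real.sqrt_pos.mpr ha
  have hsb := Real.sqrt_pos.mpr hb
  have hsB := Real.sqrt_pos.mpr hB
  have hsD := Real.sqrt_pos.mpr hD
  have hsdf := Real.sqrt_pos.mpr hdf0
  have hid : Real.sqrt b * Real.sqrt D = Real.sqrt a * Real.sqrt B := by
    rw [← Real.sqrt_mul hb.le, ← Real.sqrt_mul ha.le, hBD]
  have ha2 : a = Real.sqrt a ^ 2 := (Real.sq_sqrt ha.le).symm
  have hb2 : b = Real.sqrt b ^ 2 := (Real.sq_sqrt hb.le).symm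
  have hB2 : B = Real.sqrt B ^ 2 := (Real.sq_sqrt hB.le).symm
  rw [hkey]
  field_simp
  linear_combination (c*d*Real.sqrt a*Real.sqrt D*Real.sqrt B)*hb2 +
    (c*d*Real.sqrt a*Real.sqrt b*Real.sqrt B)*hid -
    (c*d*Real.sqrt b*B)*ha2 -
    (c*d*Real.sqrt b*Real.sqrt a^2)*hB2

/-- Proposition 1 of Hosman–Hansen–Holland: if
`σ_{y·zx} > 0`, `σ_{z·x} > 0`, `σ_{w·x} > 0`, `σ_{w·zx} > 0` and `σ_{z·wx} > 0`,
then `b̂ − β̂ = SE(b̂) · t_W · ρ_{yw·zx}`. -/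
theorem stmt0 {n : ℕ} (w : Fin n → ℝ) (hw : ∀ i, 0 < w i)
    (X : Set (Fin n → ℝ)) (hXfin : X.Finite)
    (h1 : (fun _ => (1 : ℝ)) ∈ Submodule.span ℝ X)
    (Y Z W : Fin n → ℝ)
    (Pzx Pwx Pyzx Pwzx Pzwx Pyzxw : Fin n → ℝ)
    (hPzx : IsBlp w X Z Pzx)
    (hPwx : IsBlp w X W Pwx)
    (hPyzx : IsBlp w (insert Z X) Y Pyzx)
    (hPwzx : IsBlp w (insert Z X) W Pwzx)
    (hPzwx : IsBlp w (insert W X) Z Pzwx)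
    (hPyzxw : IsBlp w (insert Z (insert W X)) Y Pyzxw)
    (bhat betahat deltahat : ℝ)
    (hb : Pyzx - bhat • Z ∈ Submodule.span ℝ X)
    (hbeta : Pyzxw - betahat • Z - deltahat • W ∈ Submodule.span ℝ X)
    (hσyzx : 0 < wip w (Y - Pyzx) (Y - Pyzx))
    (hσzx : 0 < wip w (Z - Pzx) (Z - Pzx))
    (hσwx : 0 < wip w (W - Pwx) (W - Pwx))
    (hσwzx : 0 < wip w (W - Pwzx) (W - Pwzx))
    (hσzwx : 0 < wip w (Z - Pzwx) (Z - Pzwx)) :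
    let df : ℝ := (n : ℝ) - (Module.finrank ℝ (Submodule.span ℝ X) : ℝ) - 1
    let σyzx := Real.sqrt (wip w (Y - Pyzx) (Y - Pyzx))
    let σzx := Real.sqrt (wip w (Z - Pzx) (Z - Pzx))
    let σwx := Real.sqrt (wip w (W - Pwx) (W - Pwx))
    let σwzx := Real.sqrt (wip w (W - Pwzx) (W - Pwzx))
    let σzwx := Real.sqrt (wip w (Z - Pzwx) (Z - Pzwx))
    let SEb := σyzx / (Real.sqrt df * σzx)
    let tW := (wip w (W - Pwx) (Z - Pzx) / wip w (W - Pwx) (W - Pwx)) /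
      (σzwx / (Real.sqrt df * σwx))
    let ρ := wip w (Y - Pyzx) (W - Pwzx) / (σyzx * σwzx)
    bhat - betahat = SEb * tW * ρ := by
  -- span inclusions and memberships
  have hX_SZ : Submodule.span ℝ X ≤ Submodule.span ℝ (insert Z X) :=
    Submodule.span_mono (Set.subset_insert _ _)
  have hX_SW : Submodule.span ℝ X ≤ Submodule.span ℝ (insert W X) :=
    Submodule.span_mono (Set.subset_insert _ _)
  have hSZ_SZW : Submodule.span ℝ (insert Z X) ≤ Submodule.span ℝ (insert Z (insert W X)) :=
    Submodule.span_mono (Set.insert_subset_insert (Set.subset_insert _ _))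
  have hZ_SZ : Z ∈ Submodule.span ℝ (insert Z X) :=
    Submodule.subset_span (Set.mem_insert _ _)
  have hW_SW : W ∈ Submodule.span ℝ (insert W X) :=
    Submodule.subset_span (Set.mem_insert _ _)
  have hZ_SZW : Z ∈ Submodule.span ℝ (insert Z (insert W X)) :=
    Submodule.subset_span (Set.mem_insert _ _)
  have hW_SZW : W ∈ Submodule.span ℝ (insert Z (insert W X)) :=
    Submodule.subset_span (Set.mem_insert_of_mem _ (Set.mem_insert _ _))
  have hrZ_SZ : Z - Pzx ∈ Submodule.span ℝ (insert Z X) :=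
    sub_mem hZ_SZ (hX_SZ hPzx.1)
  have hrW_SW : W - Pwx ∈ Submodule.span ℝ (insert W X) :=
    sub_mem hW_SW (hX_SW hPwx.1)
  have hsW_SZW : W - Pwzx ∈ Submodule.span ℝ (insert Z (insert W X)) :=
    sub_mem hW_SZW (hSZ_SZW hPwzx.1)
  -- commuted orthogonality facts
  have czx : ∀ v ∈ Submodule.span ℝ X, wip w v (Z - Pzx) = 0 :=
    fun v hv => (wip_comm w v _).trans (hPzx.2 v hv)
  have cwx : ∀ v ∈ Submodule.span ℝ X, wip w v (W - Pwx) = 0 :=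
    fun v hv => (wip_comm w v _).trans (hPwx.2 v hv)
  have cwzx : ∀ v ∈ Submodule.span ℝ (insert Z X), wip w v (W - Pwzx) = 0 :=
    fun v hv => (wip_comm w v _).trans (hPwzx.2 v hv)
  -- decompositions of the projections onto extended spans
  obtain ⟨g, x, hx, hPwzx_eq⟩ := Submodule.mem_span_insert.mp hPwzx.1
  obtain ⟨hcoef, x', hx', hPzwx_eq⟩ := Submodule.mem_span_insert.mp hPzwx.1
  -- basic inner product computations
  have hZrZ : wip w Z (Z - Pzx) = wip w (Z - Pzx) (Z - Pzx) := by
    rw [wip_split w Z Pzx, czx Pzx hPzx.1, add_zero]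
  have hWrZc : wip w W (Z - Pzx) = wip w (W - Pwx) (Z - Pzx) := by
    rw [wip_split w W Pwx, czx Pwx hPwx.1, add_zero]
  have hZrWc : wip w Z (W - Pwx) = wip w (W - Pwx) (Z - Pzx) := by
    rw [wip_split w Z Pzx, cwx Pzx hPzx.1, add_zero, wip_comm]
  have hWrW : wip w W (W - Pwx) = wip w (W - Pwx) (W - Pwx) := by
    rw [wip_split w W Pwx, cwx Pwx hPwx.1, add_zero]
  -- the coefficient of Z in Pwzx
  have h5 : wip w W (Z - Pzx) = g * wip w (Z - Pzx) (Z - Pzx) := by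
    rw [wip_split w W Pwzx, hPwzx.2 _ hrZ_SZ, zero_add, hPwzx_eq, wip_affine,
      czx x hx, add_zero, hZrZ]
  have hga : g * wip w (Z - Pzx) (Z - Pzx) = wip w (W - Pwx) (Z - Pzx) := by
    rw [← h5]; exact hWrZc
  -- the coefficient of W in Pzwx
  have h6 : wip w Z (W - Pwx) = hcoef * wip w (W - Pwx) (W - Pwx) := by
    rw [wip_split w Z Pzwx, hPzwx.2 _ hrW_SW, zero_add, hPzwx_eq, wip_affine,
      cwx x' hx', add_zero, hWrW]
  have hhb : hcoef * wip w (W - Pwx) (W - Pwx) = wip w (W - Pwx) (Z - Pzx) := by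
    rw [← h6]; exact hZrWc
  -- σ²_{w·zx} = b - g c
  have e1 : wip w (W - Pwzx) W = wip w (W - Pwzx) (W - Pwzx) := by
    rw [wip_split_right w W Pwzx, hPwzx.2 _ hPwzx.1, add_zero]
  have e4 : wip w Pwzx (W - Pwx) =
      g * wip w (W - Pwx) (Z - Pzx) + 0 := by
    rw [hPwzx_eq, wip_affine, cwx x hx, hZrWc]
  have hB' : wip w (W - Pwzx) (W - Pwzx) =
      wip w (W - Pwx) (W - Pwx) - g * wip w (W - Pwx) (Z - Pzx) := by
    rw [← e1, wip_split_right w W Pwx, hPwzx.2 _ (hX_SZ hPwx.1), add_zero,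
      wip_sub_left, e4, hWrW]
    ring
  -- σ²_{z·wx} = a - h c
  have e1' : wip w (Z - Pzwx) Z = wip w (Z - Pzwx) (Z - Pzwx) := by
    rw [wip_split_right w Z Pzwx, hPzwx.2 _ hPzwx.1, add_zero]
  have e4' : wip w Pzwx (Z - Pzx) =
      hcoef * wip w (W - Pwx) (Z - Pzx) + 0 := by
    rw [hPzwx_eq, wip_affine, czx x' hx', hWrZc]
  have hD' : wip w (Z - Pzwx) (Z - Pzwx) =
      wip w (Z - Pzx) (Z - Pzx) - hcoef * wip w (W - Pwx) (Z - Pzx) := by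
    rw [← e1', wip_split_right w Z Pzx, hPzwx.2 _ (hX_SW hPzx.1), add_zero,
      wip_sub_left, e4', hZrZ]
    ring
  have hBD : wip w (Z - Pzx) (Z - Pzx) * wip w (W - Pwzx) (W - Pwzx) =
      wip w (W - Pwx) (W - Pwx) * wip w (Z - Pzwx) (Z - Pzwx) := by
    rw [hB', hD']
    linear_combination (- wip w (W - Pwx) (Z - Pzx)) * hga +
      wip w (W - Pwx) (Z - Pzx) * hhb
  -- the coefficient deltahat
  have hPdecomp : Pyzxw = (Pyzxw - betahat • Z - deltahat • W) + betahat • Z + deltahat • W := by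
    funext i
    simp only [Pi.add_apply, Pi.sub_apply, Pi.smul_apply, smul_eq_mul]
    ring
  have f1 : wip w Y (W - Pwzx) = wip w (Y - Pyzx) (W - Pwzx) := by
    rw [wip_split w Y Pyzx, cwzx Pyzx hPyzx.1, add_zero]
  have f2 : wip w Y (W - Pwzx) = deltahat * wip w (W - Pwzx) (W - Pwzx) := by
    rw [wip_split w Y Pyzxw, hPyzxw.2 _ hsW_SZW, zero_add]
    conv_lhs => rw [hPdecomp]
    rw [wip_add_left, wip_add_left, wip_smul_left, wip_smul_left,
      cwzx _ (hX_SZ hbeta), cwzx Z hZ_SZ, ← wip_comm w (W - Pwzx) W, e1]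
    ring
  have hdelta : wip w (Y - Pyzx) (W - Pwzx) = deltahat * wip w (W - Pwzx) (W - Pwzx) :=
    f1.symm.trans f2
  -- bhat from the short regression
  have hPyzx_decomp : Pyzx = (Pyzx - bhat • Z) + bhat • Z := by
    funext i
    simp only [Pi.add_apply, Pi.sub_apply, Pi.smul_apply, smul_eq_mul]
    ring
  have hY1 : wip w Y (Z - Pzx) = bhat * wip w (Z - Pzx) (Z - Pzx) := by
    rw [wip_split w Y Pyzx, hPyzx.2 _ hrZ_SZ, zero_add]
    conv_lhs => rw [hPyzx_decomp]
    rw [wip_add_left, wip_smul_left, czx _ hb, zero_add, hZrZ]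
  have hY2 : wip w Y (Z - Pzx) =
      betahat * wip w (Z - Pzx) (Z - Pzx) +
      deltahat * (g * wip w (Z - Pzx) (Z - Pzx)) := by
    rw [wip_split w Y Pyzxw, hPyzxw.2 _ (hSZ_SZW hrZ_SZ), zero_add]
    conv_lhs => rw [hPdecomp]
    rw [wip_add_left, wip_add_left, wip_smul_left, wip_smul_left,
      czx _ hbeta, hZrZ, h5]
    ring
  have hmain : bhat * wip w (Z - Pzx) (Z - Pzx) =
      betahat * wip w (Z - Pzx) (Z - Pzx) +
      deltahat * wip w (W - Pwx) (Z - Pzx) := by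
    rw [← hY1, hY2, hga]
  have hkey : bhat - betahat =
      wip w (W - Pwx) (Z - Pzx) * wip w (Y - Pyzx) (W - Pwzx) /
      (wip w (Z - Pzx) (Z - Pzx) * wip w (W - Pwzx) (W - Pwzx)) := by
    rw [eq_div_iff (mul_pos hσzx hσwzx).ne']
    linear_combination wip w (W - Pwzx) (W - Pwzx) * hmain -
      wip w (W - Pwx) (Z - Pzx) * hdelta
  -- degrees of freedom
  have hZnot : Z ∉ Submodule.span ℝ X := fun hZ =>
    hσzx.ne' (hPzx.2 _ (sub_mem hZ hPzx.1))
  have hWnot : W ∉ Submodule.span ℝ (insert Z X) := fun hW =>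
    hσwzx.ne' (hPwzx.2 _ (sub_mem hW hPwzx.1))
  have hdim := dim_aux X Z W hZnot hWnot
  have hdf : (1:ℝ) ≤ (n : ℝ) - (Module.finrank ℝ (Submodule.span ℝ X) : ℝ) - 1 := by
    have : ((Module.finrank ℝ (Submodule.span ℝ X) : ℝ)) + 2 ≤ (n : ℝ) := by
      exact_mod_cast hdim
    linarith
  exact alg _ _ _ _ _ _ _ _ _ _ hσyzx hσzx hσwx hσwzx hσzwx hdf hBD hkey
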